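/- arXiv:2004.00667 — 2 statements merged into one kernel-verified Lean document; each statement's English description precedes it below -/
import Mathlib

section
/- Let I be a compact interval of length d0 ≥ 4 m² h, and let x_1, ..., x_n ∈ I be points such that every point of I is within distance h of some x_k (i.e., the fill distance of {x_k} in I is at most h). Then for every real polynomial p of degree at most m with sup-norm 1 on I, there exists k such that |p(x_k)| ≥ 1/2. -/
open Polynomial Real Finset
open Polynomial.Chebyshev

namespace MarkovAux



lemma abs_sin_nat_mul_le (n : ℕ) {θ : ℝ} (h0 : 0 ≤ Real.sin θ) :
    |Real.sin (n * θ)| ≤ n * Real.sin θ := by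
  induction n with
  | zero => simp
  | succ k ih =>
    have e : ((k:ℝ)+1) * θ = k*θ + θ := by ring
    have h1 : |Real.sin (k*θ) * Real.cos θ| ≤ |Real.sin (k*θ)| := by
      rw [abs_mul]
      exact mul_le_of_le_one_right (abs_nonneg _) (Real.abs_cos_le_one θ)
    have h2 : |Real.cos (k*θ) * Real.sin θ| ≤ Real.sin θ := by
      rw [abs_mul, abs_of_nonneg h0]
      exact mul_le_of_le_one_left h0 (Real.abs_cos_le_one _)
    have := abs_add_le (Real.sin (k*θ) * Real.cos θ) (Real.cos (k*θ) * Real.sin θ)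
    rw [← Real.sin_add] at this
    push_cast
    rw [e]
    linarith

lemma T_natDegree_le (n : ℕ) : (T ℝ (n:ℤ)).natDegree ≤ n := by
  induction n using Nat.strong_induction_on with
  | _ n ih =>
    match n with
    | 0 => simp [T_zero]
    | 1 => simp [T_one]
    | (k+2) =>
      have e : ((k+2:ℕ):ℤ) = (k:ℤ) + 2 := by push_cast; ring
      rw [e, T_add_two]
      refine le_trans (natDegree_sub_le _ _) ?_
      have h1 : (2 * X * T ℝ ((k:ℤ)+1)).natDegree ≤ k + 2 := by
        refine le_trans (natDegree_mul_le) ?_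
        have : ((k:ℤ)+1) = ((k+1:ℕ):ℤ) := by push_cast; ring
        have h2 := ih (k+1) (by omega)
        rw [← this] at h2
        have h3 : (2 * X : ℝ[X]).natDegree ≤ 1 := by
          refine le_trans (natDegree_mul_le) ?_
          simp
        omega
      have h2 := ih k (by omega)
      simp only [max_le_iff]
      exact ⟨h1, by omega⟩






lemma two_mul_eq_C (p : ℝ[X]) : 2 * p = C 2 * p := by rw [map_ofNat]

lemma T_coeff_top (n : ℕ) : (T ℝ ((n:ℤ)+1)).coeff (n+1) = 2^n := by
  induction n using Nat.strong_induction_on with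
  | _ n ih =>
    match n with
    | 0 => simp [T_one]
    | 1 =>
      have e : ((1:ℕ):ℤ) + 1 = 2 := by norm_num
      rw [e, T_two]
      simp [coeff_sub, two_mul_eq_C, coeff_one]
    | (k+2) =>
      have e : ((k+2:ℕ):ℤ) + 1 = ((k:ℤ)+1) + 2 := by push_cast; ring
      rw [e, T_add_two, two_mul_eq_C, mul_assoc]
      rw [coeff_sub, coeff_C_mul, coeff_X_mul]
      have h1 : (T ℝ ((k:ℤ)+1+1)).coeff (k+2) = 2^(k+1) := by
        have e2 : (k:ℤ)+1+1 = ((k+1:ℕ):ℤ)+1 := by push_cast; ring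
        rw [e2]
        exact ih (k+1) (by omega)
      have h2 : (T ℝ ((k:ℤ)+1)).coeff (k+2+1) = 0 := by
        apply coeff_eq_zero_of_natDegree_lt
        have e3 : (k:ℤ)+1 = ((k+1:ℕ):ℤ) := by push_cast; ring
        rw [e3]
        exact lt_of_le_of_lt (T_natDegree_le (k+1)) (by omega)
      rw [h1, h2]
      ring

lemma U_natDegree_le (n : ℕ) : (U ℝ (n:ℤ)).natDegree ≤ n := by
  induction n using Nat.strong_induction_on with
  | _ n ih =>
    match n with
    | 0 => simp [U_zero]
    | 1 =>
      rw [show ((1:ℕ):ℤ) = 1 by norm_num, U_one]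
      refine le_trans (natDegree_mul_le) (by simp)
    | (k+2) =>
      have e : ((k+2:ℕ):ℤ) = (k:ℤ) + 2 := by push_cast; ring
      rw [e, U_add_two]
      refine le_trans (natDegree_sub_le _ _) ?_
      have h1 : (2 * X * U ℝ ((k:ℤ)+1)).natDegree ≤ k + 2 := by
        refine le_trans (natDegree_mul_le) ?_
        have h2 : (U ℝ ((k:ℤ)+1)).natDegree ≤ k+1 := by
          have : ((k:ℤ)+1) = ((k+1:ℕ):ℤ) := by push_cast; ring
          rw [this]; exact ih (k+1) (by omega)
        have h3 : (2 * X : ℝ[X]).natDegree ≤ 1 :=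
          le_trans (natDegree_mul_le) (by simp)
        omega
      have h2 := ih k (by omega)
      simp only [max_le_iff]
      exact ⟨h1, by omega⟩






noncomputable def θn (m i : ℕ) : ℝ := (2*i+1) * π / (2*m)
noncomputable def ξ (m i : ℕ) : ℝ := Real.cos (θn m i)

lemma θn_pos (m i : ℕ) (hm : 1 ≤ m) : 0 < θn m i := by
  apply div_pos
  · positivity
  · positivity

lemma θn_lt_pi (m i : ℕ) (hm : 1 ≤ m) (hi : i < m) : θn m i < π := by
  rw [θn, div_lt_iff₀ (by positivity)]
  have h1 : (2*(i:ℝ)+1) < 2*m := by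
    have : (i:ℝ) + 1 ≤ m := by exact_mod_cast hi
    linarith
  nlinarith [Real.pi_pos]

lemma sin_θn_pos (m i : ℕ) (hm : 1 ≤ m) (hi : i < m) : 0 < Real.sin (θn m i) :=
  Real.sin_pos_of_pos_of_lt_pi (θn_pos m i hm) (θn_lt_pi m i hm hi)

lemma ξ_strictAnti (m : ℕ) (hm : 1 ≤ m) {i j : ℕ} (hij : i < j) (hj : j < m) :
    ξ m j < ξ m i := by
  apply Real.cos_lt_cos_of_nonneg_of_le_pi
  · exact le_of_lt (θn_pos m i hm)
  · exact le_of_lt (θn_lt_pi m j hm hj)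
  · rw [θn, θn]
    have hij' : (i:ℝ) < j := by exact_mod_cast hij
    gcongr

lemma ξ_le_ξ_zero (m : ℕ) (hm : 1 ≤ m) {i : ℕ} (hi : i < m) : ξ m i ≤ ξ m 0 := by
  rcases Nat.eq_zero_or_pos i with h | h
  · rw [h]
  · exact le_of_lt (ξ_strictAnti m hm h hi)

lemma ξ_injOn (m : ℕ) (hm : 1 ≤ m) : Set.InjOn (ξ m) (range m) := by
  intro i hi j hj hij
  simp only [coe_range, Set.mem_Iio] at hi hj
  by_contra hne
  rcases lt_or_gt_of_ne hne with h | h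
  · exact absurd hij (ne_of_gt (ξ_strictAnti m hm h hj))
  · exact absurd hij (ne_of_lt (ξ_strictAnti m hm h hi))

lemma ξ_mem_Ioo (m i : ℕ) (hm : 1 ≤ m) (hi : i < m) : ξ m i ∈ Set.Ioo (-1:ℝ) 1 := by
  constructor
  · have := Real.cos_lt_cos_of_nonneg_of_le_pi (le_of_lt (θn_pos m i hm)) le_rfl
      (θn_lt_pi m i hm hi)
    rw [Real.cos_pi] at this
    exact this
  · have := Real.cos_lt_cos_of_nonneg_of_le_pi (le_refl (0:ℝ))
      (le_of_lt (θn_lt_pi m i hm hi)) (θn_pos m i hm)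
    rw [Real.cos_zero] at this
    exact this

lemma cos_m_θn (m i : ℕ) (hm : 1 ≤ m) : Real.cos (m * θn m i) = 0 := by
  have e : (m:ℝ) * θn m i = i * π + π/2 := by
    rw [θn]
    field_simp
  rw [e, Real.cos_add_pi_div_two, Real.sin_nat_mul_pi, neg_zero]

lemma abs_sin_m_θn (m i : ℕ) (hm : 1 ≤ m) : |Real.sin (m * θn m i)| = 1 := by
  have e : (m:ℝ) * θn m i = i * π + π/2 := by
    rw [θn]; field_simp
  rw [e, Real.sin_add_pi_div_two]
  have := Real.abs_cos_int_mul_pi (i:ℤ)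
  push_cast at this
  exact this

lemma T_deriv_sin (m : ℕ) (θ : ℝ) :
    (derivative (T ℝ (m:ℤ))).eval (Real.cos θ) * Real.sin θ = m * Real.sin (m*θ) := by
  have h1 : HasDerivAt (fun t => (T ℝ (m:ℤ)).eval (Real.cos t))
      ((derivative (T ℝ (m:ℤ))).eval (Real.cos θ) * (-Real.sin θ)) θ :=
    (Polynomial.hasDerivAt _ _).comp θ (Real.hasDerivAt_cos θ)
  have h2 : (fun t => (T ℝ (m:ℤ)).eval (Real.cos t)) = fun t => Real.cos ((m:ℝ)*t) := by
    funext t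
    have := T_real_cos t (m:ℤ)
    push_cast at this
    exact this
  have h3 : HasDerivAt (fun t => Real.cos ((m:ℝ)*t)) (-Real.sin ((m:ℝ)*θ) * ((m:ℝ)*1)) θ :=
    (Real.hasDerivAt_cos ((m:ℝ)*θ)).comp θ ((hasDerivAt_id θ).const_mul (m:ℝ))
  rw [h2] at h1
  have := h1.unique h3
  nlinarith [this]

lemma T_deriv_bound (m : ℕ) : ∀ x ∈ Set.Icc (-1:ℝ) 1,
    |(derivative (T ℝ (m:ℤ))).eval x| ≤ (m:ℝ)^2 := by
  have hIoo : Set.Ioo (-1:ℝ) 1 ⊆ {x : ℝ | |(derivative (T ℝ (m:ℤ))).eval x| ≤ (m:ℝ)^2} := by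
    intro x hx
    set θ := Real.arccos x with hθ
    have hx2 : 1 - x^2 > 0 := by nlinarith [hx.1, hx.2]
    have hsin : 0 < Real.sin θ := by
      rw [hθ, Real.sin_arccos]
      positivity
    have hcos : Real.cos θ = x := Real.cos_arccos (le_of_lt hx.1) (le_of_lt hx.2)
    have hid := T_deriv_sin m θ
    rw [hcos] at hid
    have hb := abs_sin_nat_mul_le m (le_of_lt hsin)
    have habs : |(derivative (T ℝ (m:ℤ))).eval x| * Real.sin θ ≤ (m:ℝ)^2 * Real.sin θ := by
      have : |(derivative (T ℝ (m:ℤ))).eval x * Real.sin θ| = (m:ℝ) * |Real.sin (m*θ)| := by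
        rw [hid, abs_mul, abs_of_nonneg (by positivity : (0:ℝ) ≤ (m:ℝ))]
      rw [abs_mul, abs_of_nonneg (le_of_lt hsin)] at this
      rw [this]
      nlinarith [hb]
    exact le_of_mul_le_mul_right habs hsin
  intro x hx
  have hcl : IsClosed {x : ℝ | |(derivative (T ℝ (m:ℤ))).eval x| ≤ (m:ℝ)^2} :=
    isClosed_le ((Polynomial.continuous _).abs) continuous_const
  have h2 : Set.Icc (-1:ℝ) 1 ⊆ {x : ℝ | |(derivative (T ℝ (m:ℤ))).eval x| ≤ (m:ℝ)^2} := by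
    rw [← closure_Ioo (by norm_num : (-1:ℝ) ≠ 1)]
    exact closure_minimal hIoo hcl
  exact h2 hx






lemma exists_T_expansion (m : ℕ) (p : ℝ[X]) (hdeg : p.natDegree ≤ m) :
    ∃ a : ℕ → ℝ, p = ∑ k ∈ range (m+1), C (a k) * T ℝ (k:ℤ) := by
  induction m generalizing p with
  | zero =>
    refine ⟨fun _ => p.coeff 0, ?_⟩
    rw [eq_C_of_natDegree_le_zero hdeg]
    simp [T_zero]
  | succ m ih =>
    set d : ℝ := p.coeff (m+1) / 2^m with hd
    set r : ℝ[X] := p - C d * T ℝ ((m:ℤ)+1) with hr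
    have hrdeg : r.natDegree ≤ m := by
      rw [natDegree_le_iff_coeff_eq_zero]
      intro N hN
      rcases eq_or_lt_of_le (Nat.succ_le_of_lt hN) with hN1 | hN1
      · rw [hr, coeff_sub, coeff_C_mul, ← hN1, T_coeff_top, hd]
        field_simp
        ring
      · rw [hr, coeff_sub, coeff_C_mul]
        have h1 : p.coeff N = 0 := coeff_eq_zero_of_natDegree_lt (by omega)
        have h2 : (T ℝ ((m:ℤ)+1)).coeff N = 0 := by
          apply coeff_eq_zero_of_natDegree_lt
          have e : (m:ℤ)+1 = ((m+1:ℕ):ℤ) := by push_cast; ring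
          rw [e]
          exact lt_of_le_of_lt (T_natDegree_le (m+1)) (by omega)
        rw [h1, h2]; ring
    obtain ⟨a, ha⟩ := ih r hrdeg
    refine ⟨fun k => if k = m+1 then d else a k, ?_⟩
    rw [Finset.sum_range_succ]
    have : ∀ k ∈ range (m+1), C (if k = m+1 then d else a k) * T ℝ (k:ℤ)
        = C (a k) * T ℝ (k:ℤ) := by
      intro k hk
      rw [if_neg (by simp at hk; omega)]
    rw [Finset.sum_congr rfl this, ← ha]
    simp only [if_pos rfl]
    rw [hr]
    push_cast
    ring






lemma exists_odd_part (m : ℕ) (p : ℝ[X]) (hdeg : p.natDegree ≤ m) (θ0 : ℝ) :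
    ∃ c : ℝ[X], c.natDegree ≤ m - 1 ∧ ∀ θ : ℝ,
      p.eval (Real.cos (θ0+θ)) - p.eval (Real.cos (θ0-θ))
        = 2 * Real.sin θ * c.eval (Real.cos θ) := by
  obtain ⟨a, ha⟩ := exists_T_expansion m p hdeg
  refine ⟨∑ j ∈ range m, C (-(a (j+1)) * Real.sin ((j+1) * θ0)) * U ℝ (j:ℤ), ?_, ?_⟩
  · apply natDegree_sum_le_of_forall_le
    intro j hj
    refine le_trans natDegree_mul_le ?_
    simp only [mem_range] at hj
    have := U_natDegree_le j
    simp only [natDegree_C, zero_add]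
    omega
  · intro θ
    have L : p.eval (Real.cos (θ0+θ)) - p.eval (Real.cos (θ0-θ))
        = ∑ k ∈ range (m+1),
            (a k) * (Real.cos (k*(θ0+θ)) - Real.cos (k*(θ0-θ))) := by
      rw [ha]
      simp only [eval_finset_sum, eval_mul, eval_C, T_real_cos]
      rw [← Finset.sum_sub_distrib]
      refine Finset.sum_congr rfl fun k hk => ?_
      push_cast
      ring
    rw [L, Finset.sum_range_succ']
    simp only [Nat.cast_zero, zero_mul, Real.cos_zero, sub_self, mul_zero, add_zero]
    rw [eval_finset_sum, Finset.mul_sum]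
    refine Finset.sum_congr rfl fun j hj => ?_
    have hU := Polynomial.Chebyshev.U_real_cos θ (j:ℤ)
    have e1 : Real.cos (((j:ℝ)+1)*(θ0+θ)) - Real.cos (((j:ℝ)+1)*(θ0-θ))
        = -2 * Real.sin (((j:ℝ)+1)*θ0) * Real.sin (((j:ℝ)+1)*θ) := by
      rw [Real.cos_sub_cos]
      have e2 : (((j:ℝ)+1)*(θ0+θ) + ((j:ℝ)+1)*(θ0-θ))/2 = ((j:ℝ)+1)*θ0 := by ring
      have e3 : (((j:ℝ)+1)*(θ0+θ) - ((j:ℝ)+1)*(θ0-θ))/2 = ((j:ℝ)+1)*θ := by ring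
      rw [e2, e3]
    push_cast at hU ⊢
    rw [e1]
    simp only [eval_mul, eval_C]
    linear_combination ((2:ℝ)) * a (j+1) * Real.sin (((j:ℝ)+1)*θ0) * hU





lemma T_eq_nodal (m : ℕ) (hm : 1 ≤ m) :
    T ℝ (m:ℤ) = C ((2:ℝ)^(m-1)) * Lagrange.nodal (range m) (ξ m) := by
  have key : T ℝ (m:ℤ) - C ((2:ℝ)^(m-1)) * Lagrange.nodal (range m) (ξ m) = 0 := by
    apply Polynomial.eq_zero_of_degree_lt_of_eval_index_eq_zero (v := ξ m) (range m)
      (ξ_injOn m hm)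
    · rw [card_range, degree_lt_iff_coeff_zero]
      intro k hk
      rw [coeff_sub, coeff_C_mul]
      rcases eq_or_lt_of_le hk with hk1 | hk1
      · have hT : (T ℝ (m:ℤ)).coeff k = 2^(m-1) := by
          have e : (m:ℤ) = ((m-1:ℕ):ℤ) + 1 := by omega
          rw [e, ← hk1]
          have e2 : m = (m-1) + 1 := by omega
          rw [e2]
          exact T_coeff_top (m-1)
        have hN : (Lagrange.nodal (range m) (ξ m)).coeff k =
            (Lagrange.nodal (range m) (ξ m)).coeff
              ((Lagrange.nodal (range m) (ξ m)).natDegree) := by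
          rw [Lagrange.natDegree_nodal, card_range, hk1]
        rw [hT, hN, Lagrange.nodal_monic.coeff_natDegree]
        ring
      · have h1 : (T ℝ (m:ℤ)).coeff k = 0 :=
          coeff_eq_zero_of_natDegree_lt (lt_of_le_of_lt (T_natDegree_le m) hk1)
        have h2 : (Lagrange.nodal (range m) (ξ m)).coeff k = 0 := by
          apply coeff_eq_zero_of_natDegree_lt
          rw [Lagrange.natDegree_nodal, card_range]
          exact hk1
        rw [h1, h2]
        ring
    · intro i hi
      rw [eval_sub, eval_mul, Lagrange.eval_nodal_at_node hi]
      have : (T ℝ (m:ℤ)).eval (ξ m i) = Real.cos (m * θn m i) := by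
        rw [ξ, T_real_cos]
        norm_cast
      rw [this, cos_m_θn m i hm]
      ring
  linear_combination key






lemma schur_outer (m : ℕ) (hm : 1 ≤ m) (c : ℝ[X]) (hdeg : c.degree < m)
    (hvals : ∀ i ∈ range m, |c.eval (ξ m i)| ≤ 1 / Real.sin (θn m i))
    {x : ℝ} (hx0 : ξ m 0 ≤ x) (hx1 : x ≤ 1) : |c.eval x| ≤ m := by
  set w := Lagrange.nodal (range m) (ξ m) with hw
  have hinj := ξ_injOn m hm
  have hinterp : Lagrange.interpolate (range m) (ξ m) (fun i => c.eval (ξ m i)) = c :=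
    (Lagrange.eq_interpolate hinj (by rwa [card_range])).symm
  have hxmem : x ∈ Set.Icc (-1:ℝ) 1 := by
    constructor
    · exact le_trans (le_of_lt (ξ_mem_Ioo m 0 hm hm).1) hx0
    · exact hx1
  -- derivative values
  have hDi : ∀ i ∈ range m, (2:ℝ)^(m-1) * |∏ j ∈ (range m).erase i, (ξ m i - ξ m j)|
      * Real.sin (θn m i) = m := by
    intro i hi
    simp only [mem_range] at hi
    have h1 : (derivative (T ℝ (m:ℤ))).eval (ξ m i)
        = (2:ℝ)^(m-1) * (derivative w).eval (ξ m i) := by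
      rw [T_eq_nodal m hm, derivative_C_mul, eval_mul, eval_C, hw]
    have h2 : (derivative w).eval (ξ m i) = ∏ j ∈ (range m).erase i, (ξ m i - ξ m j) := by
      rw [hw, Lagrange.eval_nodal_derivative_eval_node_eq (by simpa using hi),
        Lagrange.eval_nodal]
    have h3 := T_deriv_sin m (θn m i)
    rw [show Real.cos (θn m i) = ξ m i from rfl, h1, h2] at h3
    have h4 := congrArg abs h3
    rw [abs_mul, abs_mul, abs_mul, abs_sin_m_θn m i hm,
      abs_of_nonneg (le_of_lt (sin_θn_pos m i hm hi)),
      abs_of_nonneg (by positivity : (0:ℝ) ≤ (2:ℝ)^(m-1)),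
      abs_of_nonneg (by positivity : (0:ℝ) ≤ (m:ℝ))] at h4
    rw [mul_assoc] at h4 ⊢
    rw [h4]
    ring
  -- expand c at x
  have hexp : c.eval x = ∑ i ∈ range m, c.eval (ξ m i) *
      ((∏ j ∈ (range m).erase i, (x - ξ m j))
        * (∏ j ∈ (range m).erase i, (ξ m i - ξ m j))⁻¹) := by
    conv_lhs => rw [← hinterp]
    rw [Lagrange.interpolate_apply, eval_finset_sum]
    refine Finset.sum_congr rfl fun i hi => ?_
    rw [eval_mul, eval_C]
    congr 1
    rw [Lagrange.basis, eval_prod]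
    have hbd : ∀ j ∈ (range m).erase i, (Lagrange.basisDivisor (ξ m i) (ξ m j)).eval x
        = (ξ m i - ξ m j)⁻¹ * (x - ξ m j) := by
      intro j hj
      rw [Lagrange.basisDivisor, eval_mul, eval_C, eval_sub, eval_X, eval_C]
    rw [Finset.prod_congr rfl hbd, Finset.prod_mul_distrib, Finset.prod_inv_distrib]
    ring
  -- nonneg factors
  have hfac : ∀ i ∈ range m, 0 ≤ ∏ j ∈ (range m).erase i, (x - ξ m j) := by
    intro i _
    apply Finset.prod_nonneg
    intro j hj
    have hj' : j < m := by simp only [mem_erase, mem_range] at hj; exact hj.2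
    have := ξ_le_ξ_zero m hm hj'
    linarith
  -- term bound
  have hterm : ∀ i ∈ range m, |c.eval (ξ m i) *
      ((∏ j ∈ (range m).erase i, (x - ξ m j))
        * (∏ j ∈ (range m).erase i, (ξ m i - ξ m j))⁻¹)|
      ≤ (2:ℝ)^(m-1) / m * ∏ j ∈ (range m).erase i, (x - ξ m j) := by
    intro i hi
    have hi' : i < m := by simpa using hi
    have hsin := sin_θn_pos m i hm hi'
    have hDi' := hDi i hi
    have hD0 : (0:ℝ) < |∏ j ∈ (range m).erase i, (ξ m i - ξ m j)| := by
      rcases eq_or_lt_of_le (abs_nonneg (∏ j ∈ (range m).erase i, (ξ m i - ξ m j))) with h | h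
      · exfalso
        rw [← h, mul_zero, zero_mul] at hDi'
        have hmpos : (0:ℝ) < m := by exact_mod_cast hm
        linarith
      · exact h
    rw [abs_mul, abs_mul, abs_inv,
      abs_of_nonneg (hfac i hi)]
    have hc := hvals i hi
    have h1 : |∏ j ∈ (range m).erase i, (ξ m i - ξ m j)|⁻¹
        = (2:ℝ)^(m-1) * Real.sin (θn m i) / m := by
      field_simp at hDi' ⊢
      linarith [hDi']
    rw [h1]
    have h5 : |c.eval (ξ m i)| * Real.sin (θn m i) ≤ 1 := (le_div_iff₀ hsin).mp hc
    have hb : |c.eval (ξ m i)| * ((2:ℝ)^(m-1) * Real.sin (θn m i) / m)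
        ≤ (2:ℝ)^(m-1) / m := by
      calc |c.eval (ξ m i)| * ((2:ℝ)^(m-1) * Real.sin (θn m i) / m)
          = (|c.eval (ξ m i)| * Real.sin (θn m i)) * ((2:ℝ)^(m-1) / m) := by ring
        _ ≤ 1 * ((2:ℝ)^(m-1) / m) :=
            mul_le_mul_of_nonneg_right h5 (by positivity)
        _ = (2:ℝ)^(m-1) / m := one_mul _
    calc |c.eval (ξ m i)| * ((∏ j ∈ (range m).erase i, (x - ξ m j))
          * ((2:ℝ)^(m-1) * Real.sin (θn m i) / m))
        = (|c.eval (ξ m i)| * ((2:ℝ)^(m-1) * Real.sin (θn m i) / m))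
            * ∏ j ∈ (range m).erase i, (x - ξ m j) := by ring
      _ ≤ (2:ℝ)^(m-1) / m * ∏ j ∈ (range m).erase i, (x - ξ m j) :=
          mul_le_mul_of_nonneg_right hb (hfac i hi)
  -- sum it up
  have hsum : ∑ i ∈ range m, ∏ j ∈ (range m).erase i, (x - ξ m j)
      = (derivative w).eval x := by
    rw [hw, Lagrange.derivative_nodal, eval_finset_sum]
    exact (Finset.sum_congr rfl fun i _ => by rw [Lagrange.eval_nodal]).symm
  have hTx : (derivative (T ℝ (m:ℤ))).eval x = (2:ℝ)^(m-1) * (derivative w).eval x := by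
    rw [T_eq_nodal m hm, derivative_C_mul, eval_mul, eval_C, hw]
  have hmpos : (0:ℝ) < m := by exact_mod_cast hm
  calc |c.eval x|
      = |∑ i ∈ range m, c.eval (ξ m i) *
          ((∏ j ∈ (range m).erase i, (x - ξ m j))
            * (∏ j ∈ (range m).erase i, (ξ m i - ξ m j))⁻¹)| := by rw [hexp]
    _ ≤ ∑ i ∈ range m, |c.eval (ξ m i) *
          ((∏ j ∈ (range m).erase i, (x - ξ m j))
            * (∏ j ∈ (range m).erase i, (ξ m i - ξ m j))⁻¹)| :=
        Finset.abs_sum_le_sum_abs _ _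
    _ ≤ ∑ i ∈ range m, (2:ℝ)^(m-1) / m * ∏ j ∈ (range m).erase i, (x - ξ m j) :=
        Finset.sum_le_sum hterm
    _ = (2:ℝ)^(m-1) / m * ∑ i ∈ range m, ∏ j ∈ (range m).erase i, (x - ξ m j) := by
        rw [Finset.mul_sum]
    _ = (derivative (T ℝ (m:ℤ))).eval x / m := by
        rw [hsum, hTx]; ring
    _ ≤ |(derivative (T ℝ (m:ℤ))).eval x| / m := by
        gcongr
        exact le_abs_self _
    _ ≤ (m:ℝ)^2 / m := by
        gcongr
        exact T_deriv_bound m x hxmem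
    _ = m := by field_simp






lemma θn_zero_le_pi_div_two (m : ℕ) (hm : 1 ≤ m) : θn m 0 ≤ π/2 := by
  have hm1 : (1:ℝ) ≤ m := by exact_mod_cast hm
  have h0 : θn m 0 = π/(2*m) := by rw [θn]; push_cast; ring
  rw [h0, div_le_div_iff₀ (by positivity) (by norm_num)]
  nlinarith [Real.pi_pos]

lemma sin_θn_zero_ge (m : ℕ) (hm : 1 ≤ m) : 1/(m:ℝ) ≤ Real.sin (θn m 0) := by
  have hmpos : (0:ℝ) < m := by exact_mod_cast hm
  have h0 : θn m 0 = π/(2*m) := by rw [θn]; push_cast; ring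
  have h1 : (0:ℝ) ≤ θn m 0 := (θn_pos m 0 hm).le
  have := Real.mul_le_sin h1 (θn_zero_le_pi_div_two m hm)
  refine le_trans (le_of_eq ?_) this
  rw [h0]
  field_simp

lemma hvals_of_hc (m : ℕ) (hm : 1 ≤ m) (c : ℝ[X])
    (hc : ∀ θ : ℝ, |c.eval (Real.cos θ) * Real.sin θ| ≤ 1) :
    ∀ i ∈ range m, |c.eval (ξ m i)| ≤ 1 / Real.sin (θn m i) := by
  intro i hi
  have hi' : i < m := by simpa using hi
  have hsin := sin_θn_pos m i hm hi'
  have := hc (θn m i)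
  rw [abs_mul, abs_of_nonneg hsin.le] at this
  rw [le_div_iff₀ hsin]
  exact this

lemma schur (m : ℕ) (hm : 1 ≤ m) (c : ℝ[X]) (hdeg : c.degree < m)
    (hc : ∀ θ : ℝ, |c.eval (Real.cos θ) * Real.sin θ| ≤ 1) :
    ∀ x ∈ Set.Icc (-1:ℝ) 1, |c.eval x| ≤ m := by
  intro x hx
  have hmpos : (0:ℝ) < m := by exact_mod_cast hm
  rcases le_or_gt (ξ m 0) x with hcase | hcase
  · exact schur_outer m hm c hdeg (hvals_of_hc m hm c hc) hcase hx.2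
  rcases le_or_gt x (-(ξ m 0)) with hcase2 | hcase2
  · -- mirror case
    rcases eq_or_ne c 0 with rfl | hc0
    · simpa using hmpos.le
    set ct := c.comp (-X : ℝ[X]) with hct
    have hev : ∀ t : ℝ, ct.eval t = c.eval (-t) := by
      intro t
      rw [hct, eval_comp, eval_neg, eval_X]
    have hct0 : ct ≠ 0 := by
      intro h0
      apply hc0
      apply Polynomial.funext
      intro y
      have := hev (-y)
      rw [h0, neg_neg] at this
      simpa using this.symm
    have hdeg' : ct.degree < m := by
      have h1 : ct.natDegree = c.natDegree := by
        rw [hct, natDegree_comp]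
        simp [natDegree_X]
      rw [← natDegree_lt_iff_degree_lt hct0, h1,
        natDegree_lt_iff_degree_lt hc0]
      exact hdeg
    have hcvals : ∀ θ : ℝ, |ct.eval (Real.cos θ) * Real.sin θ| ≤ 1 := by
      intro θ
      rw [hev, ← Real.cos_pi_sub]
      have := hc (π - θ)
      rwa [Real.sin_pi_sub] at this
    have := schur_outer m hm ct hdeg' (hvals_of_hc m hm ct hcvals)
      (x := -x) (by linarith) (by linarith [hx.1])
    rw [hev, neg_neg] at this
    exact this
  · -- middle zone
    set θ := Real.arccos x with hθ
    have hcos : Real.cos θ = x := Real.cos_arccos hx.1 hx.2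
    have hsx : Real.sin θ = Real.sqrt (1 - x^2) := Real.sin_arccos x
    have hξ0 : (0:ℝ) ≤ ξ m 0 :=
      Real.cos_nonneg_of_mem_Icc ⟨by linarith [θn_pos m 0 hm, Real.pi_pos],
        θn_zero_le_pi_div_two m hm⟩
    have hxsq : x^2 ≤ (ξ m 0)^2 := sq_le_sq' (by linarith) (by linarith)
    have hs0 : Real.sin (θn m 0) = Real.sqrt (1 - (ξ m 0)^2) := by
      rw [show ξ m 0 = Real.cos (θn m 0) from rfl]
      rw [Real.sin_eq_sqrt_one_sub_cos_sq (θn_pos m 0 hm).le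
        (θn_lt_pi m 0 hm hm).le]
    have hsin_ge : Real.sin (θn m 0) ≤ Real.sin θ := by
      rw [hs0, hsx]
      exact Real.sqrt_le_sqrt (by linarith)
    have hsinpos : 0 < Real.sin (θn m 0) := sin_θn_pos m 0 hm hm
    have h1m := sin_θn_zero_ge m hm
    have hcθ := hc θ
    rw [hcos, abs_mul, abs_of_nonneg (by linarith : (0:ℝ) ≤ Real.sin θ)] at hcθ
    -- |c x| * sin θ ≤ 1, sin θ ≥ 1/m
    have : |c.eval x| * (1/(m:ℝ)) ≤ 1 := by
      calc |c.eval x| * (1/(m:ℝ)) ≤ |c.eval x| * Real.sin θ := by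
            apply mul_le_mul_of_nonneg_left (by linarith) (abs_nonneg _)
        _ ≤ 1 := hcθ
    calc |c.eval x| = |c.eval x| * (1/(m:ℝ)) * m := by field_simp
      _ ≤ 1 * m := mul_le_mul_of_nonneg_right this hmpos.le
      _ = m := one_mul _






lemma bernstein (m : ℕ) (hm : 1 ≤ m) (p : ℝ[X]) (hdeg : p.natDegree ≤ m)
    (hp : ∀ x ∈ Set.Icc (-1:ℝ) 1, |p.eval x| ≤ 1) (θ0 : ℝ) :
    |(derivative p).eval (Real.cos θ0) * Real.sin θ0| ≤ m := by
  obtain ⟨c, hcdeg, hident⟩ := exists_odd_part m p hdeg θ0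
  have hc : ∀ θ : ℝ, |c.eval (Real.cos θ) * Real.sin θ| ≤ 1 := by
    intro θ
    have hid := hident θ
    have hm1 : |p.eval (Real.cos (θ0+θ))| ≤ 1 :=
      hp _ ⟨Real.neg_one_le_cos _, Real.cos_le_one _⟩
    have hm2 : |p.eval (Real.cos (θ0-θ))| ≤ 1 :=
      hp _ ⟨Real.neg_one_le_cos _, Real.cos_le_one _⟩
    have habs : |2 * Real.sin θ * c.eval (Real.cos θ)| ≤ 2 := by
      rw [← hid]
      calc |p.eval (Real.cos (θ0+θ)) - p.eval (Real.cos (θ0-θ))|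
          ≤ |p.eval (Real.cos (θ0+θ))| + |p.eval (Real.cos (θ0-θ))| := abs_sub _ _
        _ ≤ 2 := by linarith
    have e : |2 * Real.sin θ * c.eval (Real.cos θ)|
        = 2 * |c.eval (Real.cos θ) * Real.sin θ| := by
      rw [abs_mul, abs_mul, abs_mul]
      norm_num
      ring
    rw [e] at habs
    linarith
  have hcdeg' : c.degree < (m : ℕ) := by
    rcases eq_or_ne c 0 with rfl | hc0
    · rw [degree_zero]
      exact WithBot.bot_lt_coe m
    · rw [← natDegree_lt_iff_degree_lt hc0]
      omega
  have hschur := schur m hm c hcdeg' hc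
  -- compute c(1) = -(p' (cos θ0) * sin θ0)
  have inner1 : HasDerivAt (fun θ : ℝ => θ0 + θ) 1 0 := by
    simpa using (hasDerivAt_id (0:ℝ)).const_add θ0
  have inner2 : HasDerivAt (fun θ : ℝ => θ0 - θ) (-1) 0 := by
    exact (hasDerivAt_id (0:ℝ)).const_sub θ0
  have cos1 : HasDerivAt (fun θ : ℝ => Real.cos (θ0 + θ))
      (-Real.sin (θ0 + 0) * 1) 0 := (Real.hasDerivAt_cos (θ0+0)).comp 0 inner1
  have cos2 : HasDerivAt (fun θ : ℝ => Real.cos (θ0 - θ))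
      (-Real.sin (θ0 - 0) * (-1)) 0 := (Real.hasDerivAt_cos (θ0-0)).comp 0 inner2
  have hF1 : HasDerivAt (fun θ : ℝ => p.eval (Real.cos (θ0 + θ)))
      ((derivative p).eval (Real.cos (θ0+0)) * (-Real.sin (θ0+0) * 1)) 0 :=
    by have := (Polynomial.hasDerivAt p (Real.cos (θ0+0))).comp (0:ℝ) cos1; exact this
  have hF2 : HasDerivAt (fun θ : ℝ => p.eval (Real.cos (θ0 - θ)))
      ((derivative p).eval (Real.cos (θ0-0)) * (-Real.sin (θ0-0) * (-1))) 0 :=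
    by have := (Polynomial.hasDerivAt p (Real.cos (θ0-0))).comp (0:ℝ) cos2; exact this
  have hF : HasDerivAt (fun θ : ℝ => p.eval (Real.cos (θ0 + θ)) - p.eval (Real.cos (θ0 - θ)))
      ((derivative p).eval (Real.cos (θ0+0)) * (-Real.sin (θ0+0) * 1)
        - (derivative p).eval (Real.cos (θ0-0)) * (-Real.sin (θ0-0) * (-1))) 0 := hF1.sub hF2
  have hsin2 : HasDerivAt (fun θ : ℝ => 2 * Real.sin θ) (2 * Real.cos 0) 0 :=
    (Real.hasDerivAt_sin 0).const_mul 2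
  have hcc : HasDerivAt (fun θ : ℝ => c.eval (Real.cos θ))
      ((derivative c).eval (Real.cos 0) * (-Real.sin 0)) 0 :=
    (Polynomial.hasDerivAt c (Real.cos 0)).comp 0 (Real.hasDerivAt_cos 0)
  have hG : HasDerivAt (fun θ : ℝ => 2 * Real.sin θ * c.eval (Real.cos θ))
      (2 * Real.cos 0 * c.eval (Real.cos 0)
        + 2 * Real.sin 0 * ((derivative c).eval (Real.cos 0) * (-Real.sin 0))) 0 :=
    hsin2.mul hcc
  have hFG : (fun θ : ℝ => p.eval (Real.cos (θ0 + θ)) - p.eval (Real.cos (θ0 - θ)))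
      = fun θ : ℝ => 2 * Real.sin θ * c.eval (Real.cos θ) := funext hident
  rw [hFG] at hF
  have huniq := hF.unique hG
  simp only [add_zero, sub_zero, Real.sin_zero, Real.cos_zero] at huniq
  have key : (derivative p).eval (Real.cos θ0) * Real.sin θ0 = -(c.eval 1) := by
    linarith [huniq]
  rw [key, abs_neg]
  exact hschur 1 ⟨by norm_num, le_rfl⟩






lemma markov_unit (m : ℕ) (p : ℝ[X]) (hdeg : p.natDegree ≤ m)
    (hp : ∀ x ∈ Set.Icc (-1:ℝ) 1, |p.eval x| ≤ 1) :
    ∀ x ∈ Set.Icc (-1:ℝ) 1, |(derivative p).eval x| ≤ (m:ℝ)^2 := by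
  rcases Nat.eq_zero_or_pos m with rfl | hm
  · intro x _
    rw [eq_C_of_natDegree_le_zero hdeg, derivative_C]
    simp
  · have hmpos : (0:ℝ) < m := by exact_mod_cast hm
    set c : ℝ[X] := C (1/(m:ℝ)) * derivative p with hcdef
    have hcdeg : c.degree < (m:ℕ) := by
      rcases eq_or_ne c 0 with h | h
      · rw [h, degree_zero]; exact WithBot.bot_lt_coe m
      · rw [← natDegree_lt_iff_degree_lt h]
        have h1 : c.natDegree ≤ (derivative p).natDegree := natDegree_C_mul_le _ _
        have h2 := natDegree_derivative_le p
        omega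
    have hc : ∀ θ : ℝ, |c.eval (Real.cos θ) * Real.sin θ| ≤ 1 := by
      intro θ
      have hb := bernstein m hm p hdeg hp θ
      rw [hcdef]
      rw [eval_mul, eval_C]
      have e : 1/(m:ℝ) * (derivative p).eval (Real.cos θ) * Real.sin θ
          = ((derivative p).eval (Real.cos θ) * Real.sin θ) / m := by ring
      rw [e, abs_div, abs_of_nonneg hmpos.le, div_le_one hmpos]
      exact hb
    intro x hx
    have := schur m hm c hcdeg hc x hx
    rw [hcdef, eval_mul, eval_C, abs_mul, abs_of_nonneg (by positivity : (0:ℝ) ≤ 1/(m:ℝ))]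
      at this
    calc |(derivative p).eval x| = (1/(m:ℝ) * |(derivative p).eval x|) * m := by
          field_simp
      _ ≤ (m:ℝ) * m := mul_le_mul_of_nonneg_right this hmpos.le
      _ = (m:ℝ)^2 := by ring

lemma markov_interval (m : ℕ) (a b : ℝ) (hab : a < b) (p : ℝ[X]) (hdeg : p.natDegree ≤ m)
    (hp : ∀ t ∈ Set.Icc a b, |p.eval t| ≤ 1) :
    ∀ t ∈ Set.Icc a b, |(derivative p).eval t| ≤ 2*(m:ℝ)^2/(b-a) := by
  set l : ℝ[X] := C ((b-a)/2) * X + C ((a+b)/2) with hl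
  set q := p.comp l with hq
  have hldeg : l.natDegree ≤ 1 := natDegree_linear_le
  have hqdeg : q.natDegree ≤ m := by
    refine le_trans natDegree_comp_le ?_
    calc p.natDegree * l.natDegree ≤ m * 1 := by
          exact Nat.mul_le_mul hdeg hldeg
      _ = m := mul_one m
  have hqev : ∀ y : ℝ, q.eval y = p.eval ((b-a)/2 * y + (a+b)/2) := by
    intro y
    rw [hq, eval_comp, hl]
    simp
  have hqsup : ∀ y ∈ Set.Icc (-1:ℝ) 1, |q.eval y| ≤ 1 := by
    intro y hy
    rw [hqev]
    apply hp
    constructor <;> nlinarith [hy.1, hy.2]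
  have hq' := markov_unit m q hqdeg hqsup
  intro t ht
  set y := (2*t - (a+b))/(b-a) with hy
  have hymem : y ∈ Set.Icc (-1:ℝ) 1 := by
    rw [hy]
    constructor
    · rw [le_div_iff₀ (by linarith)]
      linarith [ht.1]
    · rw [div_le_one (by linarith)]
      linarith [ht.2]
  have hba : b - a ≠ 0 := by linarith
  have haff : (b-a)/2 * y + (a+b)/2 = t := by
    rw [hy]
    field_simp
    ring
  have hevl : l.eval y = t := by
    rw [hl]
    simp only [eval_add, eval_mul, eval_C, eval_X]
    linear_combination haff
  have hdl : (derivative l).eval y = (b-a)/2 := by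
    rw [hl]
    simp
  have hder : (derivative q).eval y = (b-a)/2 * (derivative p).eval t := by
    rw [hq, derivative_comp, eval_mul, eval_comp, hevl, hdl]
  have := hq' y hymem
  rw [hder, abs_mul, abs_of_nonneg (by linarith : (0:ℝ) ≤ (b-a)/2)] at this
  rw [le_div_iff₀ (by linarith : (0:ℝ) < b - a)]
  nlinarith [this]


end MarkovAux




/-- If the fill distance of points in a compact interval I of length d0 ≥ 4 m² h is at most h,
then every polynomial of degree ≤ m with sup-norm 1 on I has |p| ≥ 1/2 at some design point. -/
theorem stmt_1 (m n : ℕ) (a b : ℝ) (hab : a < b) (h : ℝ) (hh : 0 < h)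
    (hlen : 4 * (m : ℝ) ^ 2 * h ≤ b - a)
    (x : Fin n → ℝ) (hx : ∀ k, x k ∈ Set.Icc a b)
    (hfill : ∀ t ∈ Set.Icc a b, ∃ k, |t - x k| ≤ h)
    (p : Polynomial ℝ) (hdeg : p.natDegree ≤ m)
    (hsup : ∀ t ∈ Set.Icc a b, |p.eval t| ≤ 1)
    (hattain : ∃ t0 ∈ Set.Icc a b, |p.eval t0| = 1) :
    ∃ k, 1 / 2 ≤ |p.eval (x k)| := by
  obtain ⟨t0, ht0I, ht0⟩ := hattain
  obtain ⟨k, hk⟩ := hfill t0 ht0I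
  refine ⟨k, ?_⟩
  have hC := MarkovAux.markov_interval m a b hab p hdeg hsup
  set C : ℝ := 2*(m:ℝ)^2/(b-a) with hCdef
  have hmvt : ‖p.eval (x k) - p.eval t0‖ ≤ C * ‖x k - t0‖ := by
    apply Convex.norm_image_sub_le_of_norm_hasDerivWithin_le
      (f := fun t => p.eval t) (f' := fun t => (derivative p).eval t)
      (fun t ht => (Polynomial.hasDerivAt p t).hasDerivWithinAt)
      (fun t ht => by rw [Real.norm_eq_abs]; exact hC t ht)
      (convex_Icc a b) ht0I (hx k)
  rw [Real.norm_eq_abs, Real.norm_eq_abs] at hmvt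
  have hxk : |x k - t0| ≤ h := by rw [abs_sub_comm]; exact hk
  have hCnonneg : 0 ≤ C := by
    rw [hCdef]
    have hba : (0:ℝ) < b - a := by linarith
    positivity
  have hCh : C * h ≤ 1/2 := by
    rw [hCdef, div_mul_eq_mul_div, div_le_iff₀ (by linarith : (0:ℝ) < b - a)]
    nlinarith [hlen, sq_nonneg (m:ℝ)]
  have h1 : |p.eval (x k) - p.eval t0| ≤ 1/2 := by
    calc |p.eval (x k) - p.eval t0| ≤ C * |x k - t0| := hmvt
      _ ≤ C * h := mul_le_mul_of_nonneg_left hxk hCnonneg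
      _ ≤ 1/2 := hCh
  have h2 : |p.eval t0| - |p.eval (x k)| ≤ |p.eval t0 - p.eval (x k)| :=
    abs_sub_abs_le_abs_sub _ _
  rw [abs_sub_comm] at h1
  linarith [ht0 ▸ h2]
end

section
/- Suppose, for each direction j = 1, ..., d and each point x ∈ [0,1]^d, there exist coefficients α(x) ∈ ℝ^n (the same for all j) reproducing polynomials of degree ≤ m in each coordinate, with ℓ1 norm at most 2d, support only on points with |x_{k(j)} - x_{(j)}| ≤ 4m²h_j, and suppose each one-dimensional spectral density f satisfies f(ω) ≤ c(1+ω²)^{-(ν+1/2)} with ν + 1/2 ≤ m. If Q_j(u) = ∫_ℝ |1 - Σ_k u_k e^{iω(x_{k(j)} - x_{(j)})}|² f(ω) dω, then Q_j(α(x)) ≤ C d² h_j^{2ν} for a constant C independent of d, n and the points. -/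
open MeasureTheory Finset

set_option maxHeartbeats 2000000
lemma exp_taylor_bound (z : ℂ) (n : ℕ) :
    ‖(Complex.exp z - ∑ l ∈ Finset.range n, z ^ l / l.factorial)‖ ≤
      ‖z‖ ^ n * Real.exp (‖z‖) / n.factorial := by
  have hsum : Summable fun i : ℕ => z ^ i / (i.factorial : ℂ) :=
    NormedSpace.expSeries_div_summable z
  have hexp : Complex.exp z = ∑' i : ℕ, z ^ i / (i.factorial : ℂ) := by
    rw [Complex.exp_eq_exp_ℂ, NormedSpace.exp_eq_tsum_div]
  have hsplit := hsum.sum_add_tsum_nat_add n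
  have hrem : Complex.exp z - ∑ l ∈ Finset.range n, z ^ l / l.factorial
      = ∑' i : ℕ, z ^ (i + n) / ((i + n).factorial : ℂ) := by
    rw [hexp, ← hsplit]; ring
  have habs : ‖z‖ = ‖z‖ := rfl
  rw [hrem]
  have hb : ∀ i : ℕ, ‖z ^ (i + n) / ((i + n).factorial : ℂ)‖
      ≤ ‖z‖ ^ n / n.factorial * (‖z‖ ^ i / i.factorial) := by
    intro i
    rw [norm_div, norm_pow, Complex.norm_natCast]
    have hfac : (n.factorial : ℝ) * i.factorial ≤ ((i + n).factorial : ℝ) := by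
      exact_mod_cast Nat.le_of_dvd (i + n).factorial_pos
        (by simpa [mul_comm] using Nat.factorial_mul_factorial_dvd_factorial_add i n)
    calc ‖z‖ ^ (i + n) / ((i + n).factorial : ℝ)
        ≤ ‖z‖ ^ (i + n) / ((n.factorial : ℝ) * i.factorial) := by
          apply div_le_div_of_nonneg_left (by positivity) _ hfac
          positivity
      _ = ‖z‖ ^ n / n.factorial * (‖z‖ ^ i / i.factorial) := by
          rw [pow_add]; ring
  have hg : HasSum (fun i : ℕ => ‖z‖ ^ n / n.factorial * (‖z‖ ^ i / i.factorial))
      (‖z‖ ^ n / n.factorial * Real.exp ‖z‖) := by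
    have h1 := (Real.summable_pow_div_factorial ‖z‖).hasSum
    have h2 : ∑' i : ℕ, ‖z‖ ^ i / (i.factorial : ℝ) = Real.exp ‖z‖ := by
      rw [Real.exp_eq_exp_ℝ, NormedSpace.exp_eq_tsum_div]
    rw [h2] at h1
    exact h1.mul_left _
  have := tsum_of_norm_bounded hg hb
  calc ‖∑' i : ℕ, z ^ (i + n) / ((i + n).factorial : ℂ)‖
      ≤ ‖z‖ ^ n / n.factorial * Real.exp ‖z‖ := this
    _ = ‖z‖ ^ n * Real.exp ‖z‖ / n.factorial := by ring

lemma low_ptwise {n m : ℕ} (α δ : Fin n → ℝ) (ω : ℝ)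
    (hδl : ∀ l, l ≤ m → ∑ k, α k * δ k ^ l = (0:ℝ) ^ l) :
    ‖(1 - ∑ k, (α k : ℂ) * Complex.exp (Complex.I * ω * δ k))‖
      ≤ ∑ k, |α k| * (‖(Complex.I * ω * δ k)‖ ^ (m+1)
          * Real.exp (‖(Complex.I * ω * δ k)‖) / (m+1).factorial) := by
  set P : Fin n → ℂ := fun k => ∑ l ∈ Finset.range (m+1),
    (Complex.I * ω * δ k) ^ l / l.factorial with hPdef
  have hP : ∑ k, (α k : ℂ) * P k = 1 := by
    have hterm : ∀ k, (α k : ℂ) * P k = ∑ l ∈ Finset.range (m+1),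
        ((Complex.I * ω) ^ l / l.factorial) * ((α k : ℂ) * (δ k : ℂ) ^ l) := by
      intro k
      rw [hPdef, Finset.mul_sum]
      refine Finset.sum_congr rfl fun l _ => ?_
      rw [mul_pow (Complex.I * ω) (δ k : ℂ)]
      ring
    simp_rw [hterm]
    rw [Finset.sum_comm]
    have h2 : ∀ l ∈ Finset.range (m+1),
        (∑ k, ((Complex.I * ω) ^ l / l.factorial) * ((α k : ℂ) * (δ k : ℂ) ^ l))
          = ((Complex.I * ω) ^ l / l.factorial) * ((0:ℂ) ^ l) := by
      intro l hl
      rw [← Finset.mul_sum]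
      congr 1
      have h3 := hδl l (by simpa [Nat.lt_succ_iff] using Finset.mem_range.mp hl)
      have : ((∑ k, α k * δ k ^ l : ℝ) : ℂ) = (((0:ℝ) ^ l : ℝ) : ℂ) := by rw [h3]
      push_cast at this
      simpa using this
    rw [Finset.sum_congr rfl h2]
    rw [Finset.sum_eq_single 0]
    · simp
    · intro l _ hl0; simp [zero_pow hl0]
    · intro habs; simp at habs
  have hdiff : (1 : ℂ) - ∑ k, (α k : ℂ) * Complex.exp (Complex.I * ω * δ k)
      = ∑ k, (α k : ℂ) * (P k - Complex.exp (Complex.I * ω * δ k)) := by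
    rw [← hP]
    rw [← Finset.sum_sub_distrib]
    refine Finset.sum_congr rfl fun k _ => ?_
    ring
  rw [hdiff]
  calc ‖(∑ k, (α k : ℂ) * (P k - Complex.exp (Complex.I * ω * δ k)))‖
      ≤ ∑ k, ‖((α k : ℂ) * (P k - Complex.exp (Complex.I * ω * δ k)))‖ := by
        exact norm_sum_le _ _
    _ ≤ ∑ k, |α k| * (‖(Complex.I * ω * δ k)‖ ^ (m+1)
          * Real.exp (‖(Complex.I * ω * δ k)‖) / (m+1).factorial) := by
        refine Finset.sum_le_sum fun k _ => ?_
        rw [norm_mul, Complex.norm_real, Real.norm_eq_abs]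
        refine mul_le_mul_of_nonneg_left ?_ (abs_nonneg _)
        have : ‖(P k - Complex.exp (Complex.I * ω * δ k))‖
            = ‖(Complex.exp (Complex.I * ω * δ k) - P k)‖ := by
          exact norm_sub_rev _ _
        rw [this, hPdef]
        exact exp_taylor_bound _ _

/-- Main predictive-variance bound for one coordinate: if α reproduces polynomials of
degree ≤ m at the j-th coordinates, has ℓ1 norm ≤ 2d and is supported on points with
|x_{k(j)} - x_{(j)}| ≤ 4m²h_j, and f(ω) ≤ c(1+ω²)^{-(ν+1/2)} with ν + 1/2 ≤ m, then
Q_j(α) = ∫ |1 - Σ α_k e^{iω(x_{k(j)} - x_{(j)})}|² f(ω) dω ≤ C d² h_j^{2ν},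
with C independent of d, n and the points. -/
theorem stmt_18 (m : ℕ) (ν c : ℝ) (hν : 0 < ν) (hc : 0 < c) (hνm : ν + 1 / 2 ≤ m) :
    ∃ C : ℝ, ∀ (d n : ℕ) (x : Fin n → Fin d → ℝ) (h : Fin d → ℝ) (f : ℝ → ℝ)
      (α : Fin n → ℝ) (X : Fin d → ℝ) (j : Fin d),
      (∀ k i, x k i ∈ Set.Icc (0 : ℝ) 1) →
      (∀ i, X i ∈ Set.Icc (0 : ℝ) 1) →
      0 < h j → h j ≤ ((m : ℝ) ^ 2)⁻¹ / 4 →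
      (∀ ω, 0 ≤ f ω) →
      (∀ ω, f ω ≤ c * (1 + ω ^ 2) ^ (-(ν + 1 / 2))) →
      Integrable f →
      (∑ k, |α k| ≤ 2 * d) →
      (∀ k, 4 * (m : ℝ) ^ 2 * h j < |x k j - X j| → α k = 0) →
      (∀ p : Polynomial ℝ, p.natDegree ≤ m →
        ∑ k, α k * p.eval (x k j) = p.eval (X j)) →
      (∫ ω : ℝ,
          ‖(1 - ∑ k, (α k : ℂ) * Complex.exp (Complex.I * ω * (x k j - X j)))‖ ^ 2
            * f ω)
        ≤ C * d ^ 2 * (h j) ^ (2 * ν) := by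
  classical
  have hm1 : 1 ≤ m := by
    by_contra hm
    push_neg at hm
    interval_cases m
    · norm_num at hνm; linarith
  have hm0 : (1:ℝ) ≤ (m:ℝ) := by exact_mod_cast hm1
  have hmpos : (0:ℝ) < 4 * (m:ℝ) ^ 2 := by nlinarith
  set E : ℝ := Real.exp (4 * (m:ℝ) ^ 2) * (4 * (m:ℝ) ^ 2) ^ (m + 1) / (m + 1).factorial
    with hEdef
  have hE : 0 < E := by
    rw [hEdef]
    have h1 : (0:ℝ) < (4 * (m:ℝ) ^ 2) ^ (m + 1) := pow_pos hmpos _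
    have h2 : (0:ℝ) < ((m+1).factorial : ℝ) := by exact_mod_cast (m+1).factorial_pos
    positivity
  refine ⟨c * (8 * E ^ 2 + 9 / ν), ?_⟩
  intro d n x h f α X j hx hX hhj hhm hf0 hfb hfi hα1 hαsupp hpoly
  have hd1 : (1:ℝ) ≤ (d:ℝ) := by
    have := j.pos
    exact_mod_cast this
  set a : ℝ := (h j)⁻¹ with hadef
  have ha : 0 < a := inv_pos.mpr hhj
  set δ : Fin n → ℝ := fun k => x k j - X j with hδdef
  -- polynomial reproduction in centered form
  have hδl : ∀ l, l ≤ m → ∑ k, α k * δ k ^ l = (0:ℝ) ^ l := by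
    intro l hl
    have hdeg : ((Polynomial.X - Polynomial.C (X j)) ^ l).natDegree ≤ m := by
      simpa [Polynomial.natDegree_pow, Polynomial.natDegree_X_sub_C] using hl
    have := hpoly _ hdeg
    simpa [hδdef, sub_self] using this
  set G : ℝ → ℂ := fun ω =>
    1 - ∑ k, (α k : ℂ) * Complex.exp (Complex.I * ω * ((x k j : ℂ) - (X j : ℂ))) with hGdef
  set F : ℝ → ℝ := fun ω => (‖(G ω)‖) ^ 2 * f ω with hFdef
  have hGalt : ∀ ω : ℝ, G ω
      = 1 - ∑ k, (α k : ℂ) * Complex.exp (Complex.I * ω * ((δ k : ℝ) : ℂ)) := by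
    intro ω
    rw [hGdef]
    simp only [hδdef, Complex.ofReal_sub]
  have hexp1 : ∀ (ω r : ℝ), ‖(Complex.exp (Complex.I * ω * (r : ℂ)))‖ = 1 := by
    intro ω r
    rw [Complex.norm_exp]
    have hre : (Complex.I * ω * (r : ℂ)).re = 0 := by simp
    rw [hre, Real.exp_zero]
  -- crude bound on |G|
  have hGle : ∀ ω, ‖(G ω)‖ ≤ 1 + 2 * d := by
    intro ω
    have hS : ‖(∑ k, (α k : ℂ) * Complex.exp (Complex.I * ω * ((δ k : ℝ) : ℂ)))‖
        ≤ ∑ k, |α k| := by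
      refine (norm_sum_le _ _).trans ?_
      refine Finset.sum_le_sum fun k _ => ?_
      rw [norm_mul, Complex.norm_real, Real.norm_eq_abs, hexp1 ω (δ k), mul_one]
    rw [hGalt ω]
    calc ‖(1 - ∑ k, (α k : ℂ) * Complex.exp (Complex.I * ω * ((δ k : ℝ) : ℂ)))‖
        ≤ ‖(1 : ℂ)‖
            + ‖(∑ k, (α k : ℂ) * Complex.exp (Complex.I * ω * ((δ k : ℝ) : ℂ)))‖ := by
          rw [sub_eq_add_neg]
          refine (norm_add_le _ _).trans_eq ?_
          rw [norm_neg]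
      _ ≤ 1 + ∑ k, |α k| := by rw [norm_one]; exact add_le_add_right hS 1
      _ ≤ 1 + 2 * d := by linarith [hα1]
  have hGcont : Continuous G := by
    rw [hGdef]
    fun_prop
  have hFmeas : AEStronglyMeasurable F volume := by
    rw [hFdef]
    exact ((continuous_norm.comp hGcont).pow 2).aestronglyMeasurable.mul hfi.1
  have hFnonneg : ∀ ω, 0 ≤ F ω := fun ω => mul_nonneg (by positivity) (hf0 ω)
  have hFle : ∀ ω, F ω ≤ (1 + 2 * d) ^ 2 * f ω := by
    intro ω
    have h2 : (‖(G ω)‖) ^ 2 ≤ (1 + 2 * (d:ℝ)) ^ 2 :=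
      pow_le_pow_left₀ (norm_nonneg _) (hGle ω) 2
    exact mul_le_mul_of_nonneg_right h2 (hf0 ω)
  have hFi : Integrable F := by
    refine Integrable.mono' (hfi.const_mul ((1 + 2 * d) ^ 2)) hFmeas ?_
    filter_upwards with ω
    rw [Real.norm_eq_abs, abs_of_nonneg (hFnonneg ω)]
    exact hFle ω
  -- spectral tail comparison
  have hpow_tail : ∀ ω : ℝ, ω ≠ 0 →
      (1 + ω ^ 2) ^ (-(ν + 1 / 2)) ≤ |ω| ^ (-(2 * ν + 1) : ℝ) := by
    intro ω hω
    have h1 : (0:ℝ) < ω ^ 2 := by positivity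
    have h2 : (ω ^ 2 : ℝ) ≤ 1 + ω ^ 2 := by linarith
    have h3 := Real.rpow_le_rpow_of_nonpos h1 h2 (by linarith : -(ν + 1/2) ≤ 0)
    refine h3.trans_eq ?_
    rw [show (ω ^ 2 : ℝ) = |ω| ^ (2:ℕ) by rw [sq_abs],
      ← Real.rpow_natCast |ω| 2, ← Real.rpow_mul (abs_nonneg ω)]
    congr 1
    push_cast
    ring
  -- the low-frequency pointwise bound
  have hlow : ∀ ω ∈ Set.Icc (-a) a,
      ‖(G ω)‖ ≤ 2 * E * d * (h j * |ω|) ^ (m + 1) := by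
    intro ω hω
    have hωa : |ω| ≤ a := abs_le.mpr ⟨hω.1, hω.2⟩
    have hhω : h j * |ω| ≤ 1 := by
      calc h j * |ω| ≤ h j * a := mul_le_mul_of_nonneg_left hωa hhj.le
        _ = 1 := by rw [hadef]; field_simp
    have hhω0 : (0:ℝ) ≤ h j * |ω| := mul_nonneg hhj.le (abs_nonneg ω)
    have hlp := low_ptwise α δ ω hδl
    rw [hGalt ω]
    refine hlp.trans ?_
    have hterm : ∀ k, |α k| * (‖(Complex.I * ω * ((δ k : ℝ) : ℂ))‖ ^ (m + 1)
        * Real.exp (‖(Complex.I * ω * ((δ k : ℝ) : ℂ))‖) / (m + 1).factorial)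
        ≤ |α k| * (E * (h j * |ω|) ^ (m + 1)) := by
      intro k
      by_cases hαk : α k = 0
      · simp [hαk]
      · have hδk : |δ k| ≤ 4 * (m:ℝ) ^ 2 * h j := by
          by_contra hcon
          push_neg at hcon
          exact hαk (hαsupp k hcon)
        have habs : ‖(Complex.I * ω * ((δ k : ℝ) : ℂ))‖ = |ω| * |δ k| := by
          rw [norm_mul, norm_mul, Complex.norm_I, Complex.norm_real, Complex.norm_real,
            Real.norm_eq_abs, Real.norm_eq_abs, one_mul]
        refine mul_le_mul_of_nonneg_left ?_ (abs_nonneg _)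
        have hr1 : ‖(Complex.I * ω * ((δ k : ℝ) : ℂ))‖
            ≤ 4 * (m:ℝ) ^ 2 * (h j * |ω|) := by
          rw [habs]
          calc |ω| * |δ k| ≤ |ω| * (4 * (m:ℝ) ^ 2 * h j) :=
                mul_le_mul_of_nonneg_left hδk (abs_nonneg ω)
            _ = 4 * (m:ℝ) ^ 2 * (h j * |ω|) := by ring
        have hr2 : ‖(Complex.I * ω * ((δ k : ℝ) : ℂ))‖ ≤ 4 * (m:ℝ) ^ 2 := by
          refine hr1.trans ?_
          nlinarith [hhω, hmpos]
        have hfacpos : (0:ℝ) < ((m + 1).factorial : ℝ) := by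
          exact_mod_cast (m + 1).factorial_pos
        have hmain : ‖(Complex.I * ω * ((δ k : ℝ) : ℂ))‖ ^ (m + 1)
            * Real.exp (‖(Complex.I * ω * ((δ k : ℝ) : ℂ))‖)
            ≤ (4 * (m:ℝ) ^ 2 * (h j * |ω|)) ^ (m + 1) * Real.exp (4 * (m:ℝ) ^ 2) := by
          refine mul_le_mul (pow_le_pow_left₀ (norm_nonneg _) hr1 _)
            (Real.exp_le_exp.mpr hr2) (Real.exp_pos _).le ?_
          positivity
        calc ‖(Complex.I * ω * ((δ k : ℝ) : ℂ))‖ ^ (m + 1)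
              * Real.exp (‖(Complex.I * ω * ((δ k : ℝ) : ℂ))‖) / (m + 1).factorial
            ≤ (4 * (m:ℝ) ^ 2 * (h j * |ω|)) ^ (m + 1) * Real.exp (4 * (m:ℝ) ^ 2)
                / (m + 1).factorial := by
              exact (div_le_div_iff_of_pos_right hfacpos).mpr hmain
          _ = E * (h j * |ω|) ^ (m + 1) := by
              rw [hEdef, mul_pow]
              ring
    calc ∑ k, |α k| * (‖(Complex.I * ω * ((δ k : ℝ) : ℂ))‖ ^ (m + 1)
          * Real.exp (‖(Complex.I * ω * ((δ k : ℝ) : ℂ))‖) / (m + 1).factorial)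
        ≤ ∑ k, |α k| * (E * (h j * |ω|) ^ (m + 1)) := Finset.sum_le_sum fun k _ => hterm k
      _ = (∑ k, |α k|) * (E * (h j * |ω|) ^ (m + 1)) := by rw [← Finset.sum_mul]
      _ ≤ 2 * d * (E * (h j * |ω|) ^ (m + 1)) := by
          refine mul_le_mul_of_nonneg_right hα1 ?_
          positivity
      _ = 2 * E * d * (h j * |ω|) ^ (m + 1) := by ring
  -- low-frequency integral bound
  have hq0 : (0:ℝ) ≤ 2 * (m:ℝ) + 1 - 2 * ν := by linarith
  have hFlow : ∀ ω ∈ Set.Icc (-a) a,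
      F ω ≤ c * (2 * E * d) ^ 2
        * ((h j) ^ (2 * m + 2) * a ^ ((2 * (m:ℝ) + 1) - 2 * ν)) := by
    intro ω hω
    have hωa : |ω| ≤ a := abs_le.mpr ⟨hω.1, hω.2⟩
    have hb := hlow ω hω
    have hRHS : (0:ℝ) ≤ c * (2 * E * d) ^ 2
        * ((h j) ^ (2 * m + 2) * a ^ ((2 * (m:ℝ) + 1) - 2 * ν)) := by
      have := Real.rpow_nonneg ha.le ((2 * (m:ℝ) + 1) - 2 * ν)
      positivity
    have h2 : F ω ≤ (2 * E * d) ^ 2 * (h j * |ω|) ^ (2 * m + 2)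
        * (c * (1 + ω ^ 2) ^ (-(ν + 1 / 2))) := by
      have habs2 : (‖(G ω)‖) ^ 2
          ≤ (2 * E * d) ^ 2 * (h j * |ω|) ^ (2 * m + 2) := by
        have := pow_le_pow_left₀ (norm_nonneg _) hb 2
        refine this.trans_eq ?_
        rw [mul_pow, ← pow_mul]
        ring_nf
      calc F ω ≤ (‖(G ω)‖) ^ 2 * (c * (1 + ω ^ 2) ^ (-(ν + 1 / 2))) := by
            exact mul_le_mul_of_nonneg_left (hfb ω) (by positivity)
        _ ≤ (2 * E * d) ^ 2 * (h j * |ω|) ^ (2 * m + 2)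
            * (c * (1 + ω ^ 2) ^ (-(ν + 1 / 2))) := by
            refine mul_le_mul_of_nonneg_right habs2 ?_
            have := Real.rpow_nonneg (by positivity : (0:ℝ) ≤ 1 + ω ^ 2) (-(ν + 1/2))
            positivity
    by_cases hω0 : ω = 0
    · refine le_trans ?_ hRHS
      refine h2.trans_eq ?_
      rw [hω0]
      norm_num
    · refine h2.trans ?_
      have hkey : (h j * |ω|) ^ (2 * m + 2) * (1 + ω ^ 2) ^ (-(ν + 1 / 2))
          ≤ (h j) ^ (2 * m + 2) * a ^ ((2 * (m:ℝ) + 1) - 2 * ν) := by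
        have hstep1 : (h j * |ω|) ^ (2 * m + 2) * (1 + ω ^ 2) ^ (-(ν + 1 / 2))
            ≤ (h j) ^ (2 * m + 2) * (|ω| ^ (2 * m + 2) * |ω| ^ (-(2 * ν + 1) : ℝ)) := by
          rw [mul_pow]
          have h3 := hpow_tail ω hω0
          have h4 : (0:ℝ) ≤ (h j) ^ (2 * m + 2) * |ω| ^ (2 * m + 2) := by positivity
          calc (h j) ^ (2 * m + 2) * |ω| ^ (2 * m + 2) * (1 + ω ^ 2) ^ (-(ν + 1 / 2))
              ≤ (h j) ^ (2 * m + 2) * |ω| ^ (2 * m + 2) * |ω| ^ (-(2 * ν + 1) : ℝ) :=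
                mul_le_mul_of_nonneg_left h3 h4
            _ = (h j) ^ (2 * m + 2) * (|ω| ^ (2 * m + 2) * |ω| ^ (-(2 * ν + 1) : ℝ)) := by
                ring
        refine hstep1.trans ?_
        have hωpos : (0:ℝ) < |ω| := abs_pos.mpr hω0
        have hstep2 : |ω| ^ (2 * m + 2) * |ω| ^ (-(2 * ν + 1) : ℝ)
            = |ω| ^ ((2 * (m:ℝ) + 1) - 2 * ν) := by
          rw [← Real.rpow_natCast |ω| (2 * m + 2), ← Real.rpow_add hωpos]
          congr 1
          push_cast
          ring
        rw [hstep2]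
        refine mul_le_mul_of_nonneg_left ?_ (by positivity)
        exact Real.rpow_le_rpow (abs_nonneg ω) hωa hq0
      calc (2 * E * d) ^ 2 * (h j * |ω|) ^ (2 * m + 2)
            * (c * (1 + ω ^ 2) ^ (-(ν + 1 / 2)))
          = c * (2 * E * d) ^ 2
            * ((h j * |ω|) ^ (2 * m + 2) * (1 + ω ^ 2) ^ (-(ν + 1 / 2))) := by ring
        _ ≤ c * (2 * E * d) ^ 2
            * ((h j) ^ (2 * m + 2) * a ^ ((2 * (m:ℝ) + 1) - 2 * ν)) := by
            exact mul_le_mul_of_nonneg_left hkey (by positivity)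
  have hvol : (volume (Set.Icc (-a) a)).toReal = 2 * a := by
    rw [Real.volume_Icc, ENNReal.toReal_ofReal (by linarith)]
    ring
  have hlowint : ∫ ω in Set.Icc (-a) a, F ω
      ≤ c * (2 * E * d) ^ 2
        * ((h j) ^ (2 * m + 2) * a ^ ((2 * (m:ℝ) + 1) - 2 * ν)) * (2 * a) := by
    refine (le_abs_self _).trans ?_
    rw [← Real.norm_eq_abs, ← hvol]
    refine norm_setIntegral_le_of_norm_le_const_ae' ?_ ?_
    · rw [Real.volume_Icc]; exact ENNReal.ofReal_lt_top
    · filter_upwards with ω hω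
      rw [Real.norm_eq_abs, abs_of_nonneg (hFnonneg ω)]
      exact hFlow ω hω
  have hrw : ∀ t : ℝ, a ^ t = (h j) ^ (-t) := by
    intro t
    rw [hadef, ← Real.rpow_neg_one (h j), ← Real.rpow_mul hhj.le, neg_one_mul]
  have hcalc : (h j) ^ (2 * m + 2) * a ^ ((2 * (m:ℝ) + 1) - 2 * ν) * (2 * a)
      = 2 * (h j) ^ (2 * ν) := by
    have ha1 : a = (h j) ^ (-1 : ℝ) := by rw [hadef, Real.rpow_neg_one]
    rw [hrw, ha1, ← Real.rpow_natCast (h j) (2 * m + 2)]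
    rw [show (h j) ^ (((2 * m + 2 : ℕ) : ℝ))
          * (h j) ^ (-((2 * (m:ℝ) + 1) - 2 * ν)) * (2 * (h j) ^ (-1 : ℝ))
        = 2 * ((h j) ^ (((2 * m + 2 : ℕ) : ℝ))
          * ((h j) ^ (-((2 * (m:ℝ) + 1) - 2 * ν)) * (h j) ^ (-1 : ℝ))) from by ring]
    rw [← Real.rpow_add hhj, ← Real.rpow_add hhj]
    congr 1
    push_cast
    ring
  have hLOW : ∫ ω in Set.Icc (-a) a, F ω
      ≤ 8 * c * E ^ 2 * d ^ 2 * (h j) ^ (2 * ν) := by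
    refine hlowint.trans_eq ?_
    rw [mul_assoc (c * (2 * E * d) ^ 2), hcalc]
    ring
  -- high-frequency part
  set p : ℝ := -(2 * ν + 1) with hpdef
  have hp : p < -1 := by rw [hpdef]; linarith
  have htail : ∀ ω : ℝ, ω ≠ 0 → F ω ≤ (1 + 2 * d) ^ 2 * c * |ω| ^ p := by
    intro ω hω
    calc F ω ≤ (1 + 2 * d) ^ 2 * f ω := hFle ω
      _ ≤ (1 + 2 * d) ^ 2 * (c * (1 + ω ^ 2) ^ (-(ν + 1 / 2))) := by
          exact mul_le_mul_of_nonneg_left (hfb ω) (by positivity)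
      _ ≤ (1 + 2 * d) ^ 2 * (c * |ω| ^ p) := by
          refine mul_le_mul_of_nonneg_left ?_ (by positivity)
          exact mul_le_mul_of_nonneg_left (hpow_tail ω hω) hc.le
      _ = (1 + 2 * d) ^ 2 * c * |ω| ^ p := by ring
  have hIoi_int : IntegrableOn (fun ω : ℝ => (1 + 2 * d) ^ 2 * c * ω ^ p) (Set.Ioi a) :=
    (integrableOn_Ioi_rpow_of_lt hp ha).const_mul _
  have hIoi_val : ∫ ω in Set.Ioi a, (ω : ℝ) ^ p = a ^ (-(2 * ν)) / (2 * ν) := by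
    rw [integral_Ioi_rpow_of_lt hp ha, hpdef]
    rw [show -(2 * ν + 1) + 1 = -(2 * ν) from by ring]
    rw [neg_div_neg_eq]
  have hIoiF : ∫ ω in Set.Ioi a, F ω
      ≤ (1 + 2 * d) ^ 2 * c * (a ^ (-(2 * ν)) / (2 * ν)) := by
    calc ∫ ω in Set.Ioi a, F ω
        ≤ ∫ ω in Set.Ioi a, (1 + 2 * d) ^ 2 * c * ω ^ p := by
          refine setIntegral_mono_on hFi.integrableOn hIoi_int measurableSet_Ioi ?_
          intro ω hω
          have hω0 : (0:ℝ) < ω := lt_trans ha hω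
          have := htail ω hω0.ne'
          rwa [abs_of_pos hω0] at this
      _ = (1 + 2 * d) ^ 2 * c * (a ^ (-(2 * ν)) / (2 * ν)) := by
          rw [integral_const_mul, hIoi_val]
  have hFneg : Integrable (fun ω : ℝ => F (-ω)) := by
    have := ((Measure.measurePreserving_neg (volume : Measure ℝ)).integrable_comp
      hFmeas).mpr hFi
    exact this
  have hIioF : ∫ ω in Set.Iio (-a), F ω
      ≤ (1 + 2 * d) ^ 2 * c * (a ^ (-(2 * ν)) / (2 * ν)) := by
    rw [← integral_Iic_eq_integral_Iio, ← integral_comp_neg_Ioi]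
    calc ∫ ω in Set.Ioi a, F (-ω)
        ≤ ∫ ω in Set.Ioi a, (1 + 2 * d) ^ 2 * c * ω ^ p := by
          refine setIntegral_mono_on hFneg.integrableOn hIoi_int measurableSet_Ioi ?_
          intro ω hω
          have hω0 : (0:ℝ) < ω := lt_trans ha hω
          have := htail (-ω) (by simpa using hω0.ne')
          rwa [abs_neg, abs_of_pos hω0] at this
      _ = (1 + 2 * d) ^ 2 * c * (a ^ (-(2 * ν)) / (2 * ν)) := by
          rw [integral_const_mul, hIoi_val]
  have hane : a ^ (-(2 * ν)) = (h j) ^ (2 * ν) := by rw [hrw, neg_neg]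
  have hcompl : (Set.Icc (-a) a)ᶜ = Set.Iio (-a) ∪ Set.Ioi a := by
    ext ω
    simp only [Set.mem_compl_iff, Set.mem_Icc, Set.mem_union, Set.mem_Iio, Set.mem_Ioi,
      not_and_or, not_le]
  have hHIGH : ∫ ω in (Set.Icc (-a) a)ᶜ, F ω
      ≤ 9 * c / ν * d ^ 2 * (h j) ^ (2 * ν) := by
    have hdisj : Disjoint (Set.Iio (-a)) (Set.Ioi a) := by
      rw [Set.disjoint_iff_inter_eq_empty]
      ext ω
      simp only [Set.mem_inter_iff, Set.mem_Iio, Set.mem_Ioi, Set.mem_empty_iff_false,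
        iff_false, not_and, not_lt]
      intro hω
      linarith
    have hsplit2 : ∫ ω in (Set.Icc (-a) a)ᶜ, F ω
        = (∫ ω in Set.Iio (-a), F ω) + ∫ ω in Set.Ioi a, F ω := by
      rw [hcompl]
      exact setIntegral_union hdisj measurableSet_Ioi hFi.integrableOn hFi.integrableOn
    rw [hsplit2]
    have hd9 : ((1:ℝ) + 2 * d) ^ 2 ≤ 9 * (d:ℝ) ^ 2 := by nlinarith
    have hpos : (0:ℝ) ≤ (h j) ^ (2 * ν) / ν := by
      have := Real.rpow_nonneg hhj.le (2 * ν)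
      positivity
    calc (∫ ω in Set.Iio (-a), F ω) + ∫ ω in Set.Ioi a, F ω
        ≤ (1 + 2 * d) ^ 2 * c * (a ^ (-(2 * ν)) / (2 * ν))
          + (1 + 2 * d) ^ 2 * c * (a ^ (-(2 * ν)) / (2 * ν)) := add_le_add hIioF hIoiF
      _ = (1 + 2 * d) ^ 2 * c * ((h j) ^ (2 * ν) / ν) := by
          rw [hane]
          have habc : ∀ Y H : ℝ, Y * (H / (2 * ν)) + Y * (H / (2 * ν)) = Y * (H / ν) := by
            intro Y H
            have hν' : (ν:ℝ) ≠ 0 := hν.ne'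
            field_simp
            ring
          exact habc _ _
      _ ≤ 9 * (d:ℝ) ^ 2 * c * ((h j) ^ (2 * ν) / ν) := by
          refine mul_le_mul_of_nonneg_right ?_ hpos
          exact mul_le_mul_of_nonneg_right hd9 hc.le
      _ = 9 * c / ν * d ^ 2 * (h j) ^ (2 * ν) := by
          have habc2 : ∀ D H : ℝ, 9 * D ^ 2 * c * (H / ν) = 9 * c / ν * D ^ 2 * H := by
            intro D H
            ring
          exact habc2 _ _
  -- combine
  have hsum := integral_add_compl (measurableSet_Icc : MeasurableSet (Set.Icc (-a) a)) hFi
  have hfinal : ∫ ω, F ω ≤ c * (8 * E ^ 2 + 9 / ν) * d ^ 2 * (h j) ^ (2 * ν) := by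
    rw [← hsum]
    have hEq : c * (8 * E ^ 2 + 9 / ν) * d ^ 2 * (h j) ^ (2 * ν)
        = 8 * c * E ^ 2 * d ^ 2 * (h j) ^ (2 * ν)
          + 9 * c / ν * d ^ 2 * (h j) ^ (2 * ν) := by ring
    rw [hEq]
    exact add_le_add hLOW hHIGH
  exact hfinal
end
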